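/- arXiv:1702.05257 — 2 statements merged into one kernel-verified Lean document; each statement's English description precedes it below -/
import Mathlib

section
/- Let Γ be a connected bipartite vertex-transitive finite simple graph of diameter at least 2. Then Γ is 2-distance-balanced. -/
open SimpleGraph

/-- The set of vertices strictly closer to `u` than to `v`. -/
def wSet {V : Type*} (G : SimpleGraph V) (u v : V) : Set V :=
  {w | G.dist u w < G.dist v w}

/-- The pair `u, v` is balanced if `|W_{uv}| = |W_{vu}|`. -/
def IsBalancedPair {V : Type*} (G : SimpleGraph V) (u v : V) : Prop :=
  (wSet G u v).ncard = (wSet G v u).ncard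

/-- `G` is `ℓ`-distance-balanced if every pair of vertices at distance `ℓ` is balanced. -/
def IsDistBalanced {V : Type*} (G : SimpleGraph V) (ℓ : ℕ) : Prop :=
  ∀ u v : V, G.dist u v = ℓ → IsBalancedPair G u v

/-- `G` is highly distance-balanced if it is `ℓ`-distance-balanced for all `1 ≤ ℓ ≤ diam`. -/
def IsHighlyDistBalanced {V : Type*} (G : SimpleGraph V) : Prop :=
  ∀ ℓ : ℕ, 1 ≤ ℓ → ℓ ≤ G.diam → IsDistBalanced G ℓ

/-- The generalized Petersen graph `GP(n,k)`: `Sum.inl i` is the outer vertex `u_i`,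
`Sum.inr i` is the inner vertex `v_i`. -/
def GP (n k : ℕ) : SimpleGraph (ZMod n ⊕ ZMod n) :=
  SimpleGraph.fromRel (fun x y =>
    match x, y with
    | Sum.inl i, Sum.inl j => j = i + 1
    | Sum.inr i, Sum.inr j => j = i + (k : ZMod n)
    | Sum.inl i, Sum.inr j => i = j
    | Sum.inr _, Sum.inl _ => False)

/-- The Cayley graph of a group with connection set `S` (intended for `S = S⁻¹`, `1 ∉ S`). -/
def cayleyGraph {A : Type*} [Group A] (S : Set A) : SimpleGraph A :=
  SimpleGraph.fromRel (fun g h => g⁻¹ * h ∈ S)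


lemma iso_dist {V : Type*} (G : SimpleGraph V) (hc : G.Connected) (α : G ≃g G) (u v : V) :
    G.dist (α u) (α v) = G.dist u v := by
  have key : ∀ (β : G ≃g G) (a b : V), G.dist (β a) (β b) ≤ G.dist a b := by
    intro β a b
    obtain ⟨p, hp⟩ := (hc a b).exists_walk_length_eq_dist
    calc G.dist (β a) (β b) ≤ (p.map β.toHom).length := SimpleGraph.dist_le _
      _ = G.dist a b := by rw [SimpleGraph.Walk.length_map, hp]
  refine le_antisymm (key α u v) ?_
  have := key α.symm (α u) (α v)
  simpa using this

lemma walk_parity {V : Type*} {G : SimpleGraph V} (c : G.Coloring (Fin 2)) {u w : V}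
    (p : G.Walk u w) : c u = c w ↔ Even p.length := by
  induction p with
  | nil => simp
  | cons h q ih =>
    have hne : c _ ≠ c _ := c.valid h
    have hf : ∀ a b d : Fin 2, a ≠ b → (a = d ↔ ¬ b = d) := by decide
    rw [SimpleGraph.Walk.length_cons, Nat.even_add_one, ← ih, hf _ _ _ hne]

theorem statement_5 {V : Type*} [Fintype V] (G : SimpleGraph V) (hc : G.Connected)
    (hbip : G.Colorable 2)
    (hvt : ∀ u v : V, ∃ α : G ≃g G, α u = v)
    (hdiam : 2 ≤ G.diam) :
    IsDistBalanced G 2 := by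
  classical
  intro u v huv
  obtain ⟨c⟩ := hbip
  -- parity: for every w, dist u w and dist v w have equal parity
  have hpar : ∀ a b : V, (c a = c b ↔ Even (G.dist a b)) := by
    intro a b
    obtain ⟨p, hp⟩ := (hc a b).exists_walk_length_eq_dist
    rw [← hp]; exact walk_parity c p
  have hcuv : c u = c v := by rw [hpar]; rw [huv]; decide
  have hparw : ∀ w : V, G.dist u w % 2 = G.dist v w % 2 := by
    intro w
    have h1 := hpar u w
    have h2 := hpar v w
    rw [Nat.even_iff] at h1 h2
    rcases eq_or_ne (c u) (c w) with h | h
    · rw [h1.mp h, (h2.mp (hcuv ▸ h)).symm]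
    · have h1' : ¬ G.dist u w % 2 = 0 := fun hh => h (h1.mpr hh)
      have h2' : ¬ G.dist v w % 2 = 0 := fun hh => (hcuv ▸ h) (h2.mpr hh)
      omega
  -- triangle inequalities
  have htri : ∀ w : V, G.dist v w ≤ 2 + G.dist u w ∧ G.dist u w ≤ 2 + G.dist v w := by
    intro w
    constructor
    · calc G.dist v w ≤ G.dist v u + G.dist u w := hc.dist_triangle
        _ = 2 + G.dist u w := by rw [SimpleGraph.dist_comm, huv]
    · calc G.dist u w ≤ G.dist u v + G.dist v w := hc.dist_triangle
        _ = 2 + G.dist v w := by rw [huv]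
  -- the pointwise value
  have hval : ∀ w : V, (G.dist v w : ℤ) - G.dist u w
      = (if w ∈ wSet G u v then 2 else if w ∈ wSet G v u then -2 else 0) := by
    intro w
    have h1 := hparw w
    obtain ⟨h2, h3⟩ := htri w
    by_cases hA : w ∈ wSet G u v
    · simp only [hA, if_true]
      have : G.dist u w < G.dist v w := hA
      omega
    · by_cases hB : w ∈ wSet G v u
      · simp only [hA, if_false, hB, if_true]
        have : G.dist v w < G.dist u w := hB
        omega
      · simp only [hA, if_false, hB]
        have h4 : ¬ G.dist u w < G.dist v w := hA
        have h5 : ¬ G.dist v w < G.dist u w := hB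
        omega
  -- sum of distances is invariant
  obtain ⟨α, hα⟩ := hvt u v
  have hsum : ∑ w : V, (G.dist v w : ℤ) = ∑ w : V, (G.dist u w : ℤ) := by
    calc ∑ w : V, (G.dist v w : ℤ) = ∑ w : V, (G.dist (α u) (α w) : ℤ) := by
          rw [← Equiv.sum_comp α.toEquiv (fun w => (G.dist v w : ℤ))]
          simp [hα]
      _ = ∑ w : V, (G.dist u w : ℤ) := by
          simp_rw [iso_dist G hc α]
  have hzero : ∑ w : V, ((G.dist v w : ℤ) - G.dist u w) = 0 := by
    rw [Finset.sum_sub_distrib, hsum, sub_self]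
  rw [Finset.sum_congr rfl (fun w _ => hval w)] at hzero
  -- disjointness and counting
  have hdisj : ∀ w : V, w ∈ wSet G u v → w ∉ wSet G v u := by
    intro w h1 h2
    have h1' : G.dist u w < G.dist v w := h1
    have h2' : G.dist v w < G.dist u w := h2
    omega
  have hsplit : ∀ w : V, (if w ∈ wSet G u v then (2:ℤ) else if w ∈ wSet G v u then -2 else 0)
      = 2 * (if w ∈ wSet G u v then (1:ℤ) else 0) - 2 * (if w ∈ wSet G v u then (1:ℤ) else 0) := by
    intro w
    by_cases hA : w ∈ wSet G u v
    · simp [hA, hdisj w hA]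
    · by_cases hB : w ∈ wSet G v u <;> simp [hA, hB]
  rw [Finset.sum_congr rfl (fun w _ => hsplit w), Finset.sum_sub_distrib,
    ← Finset.mul_sum, ← Finset.mul_sum, Finset.sum_boole, Finset.sum_boole] at hzero
  have hcards : ((Finset.univ.filter (· ∈ wSet G u v)).card : ℤ)
      = ((Finset.univ.filter (· ∈ wSet G v u)).card : ℤ) := by omega
  unfold IsBalancedPair
  rw [Set.ncard_eq_toFinset_card', Set.ncard_eq_toFinset_card']
  have e1 : (wSet G u v).toFinset = Finset.univ.filter (· ∈ wSet G u v) := by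
    ext w; simp
  have e2 : (wSet G v u).toFinset = Finset.univ.filter (· ∈ wSet G v u) := by
    ext w; simp
  rw [e1, e2]
  exact_mod_cast hcards
end

section
/- Let m ≥ 3 be an integer and consider the generalized Petersen graph GP(4m, 2m-1). Then there exists an automorphism of GP(4m, 2m-1) interchanging the vertices u_0 and v_m; in particular, the pair u_0, v_m is balanced. -/
open SimpleGraph

lemma iso_dist_le' {V W : Type*} {G : SimpleGraph V} {H : SimpleGraph W}
    (β : G ≃g H) (u v : V) : H.dist (β u) (β v) ≤ G.dist u v := by
  by_cases h : G.Reachable u v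
  · obtain ⟨p, hp⟩ := h.exists_walk_length_eq_dist
    calc H.dist (β u) (β v) ≤ (p.map β.toHom).length := SimpleGraph.dist_le _
      _ = G.dist u v := by rw [SimpleGraph.Walk.length_map, hp]
  · rw [SimpleGraph.dist_eq_zero_of_not_reachable h,
      SimpleGraph.dist_eq_zero_of_not_reachable (by rwa [Iso.reachable_iff])]

lemma iso_dist_eq' {V W : Type*} {G : SimpleGraph V} {H : SimpleGraph W}
    (α : G ≃g H) (u v : V) : H.dist (α u) (α v) = G.dist u v := by
  refine le_antisymm (iso_dist_le' α u v) ?_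
  have := iso_dist_le' α.symm (α u) (α v)
  simpa using this

theorem statement_16 (m : ℕ) (hm : 3 ≤ m) :
    (∃ α : GP (4 * m) (2 * m - 1) ≃g GP (4 * m) (2 * m - 1),
        α (Sum.inl 0) = Sum.inr (m : ZMod (4 * m)) ∧
        α (Sum.inr (m : ZMod (4 * m))) = Sum.inl 0) ∧
    IsBalancedPair (GP (4 * m) (2 * m - 1)) (Sum.inl 0) (Sum.inr (m : ZMod (4 * m))) := by
  set μ : ZMod (4 * m) := (m : ZMod (4 * m)) with hμ
  set K : ZMod (4 * m) := ((2 * m - 1 : ℕ) : ZMod (4 * m)) with hK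
  have hKval : K = 2 * μ - 1 := by
    rw [hK, Nat.cast_sub (by omega)]
    push_cast
    ring
  have h0 : (4 : ZMod (4 * m)) * μ = 0 := by
    have := ZMod.natCast_self (4 * m)
    push_cast at this
    linear_combination this
  have hKK : K * K = 1 := by
    rw [hKval]
    linear_combination (μ - 1) * h0
  obtain ⟨c, hc, hcm⟩ : ∃ c : ZMod (4 * m), (c = K ∨ c = -K) ∧ c * μ + μ = 0 := by
    rcases Nat.even_or_odd m with ⟨t, ht⟩ | ⟨t, ht⟩
    · refine ⟨K, Or.inl rfl, ?_⟩
      have hμt : μ = 2 * (t : ZMod (4 * m)) := by rw [hμ, ht]; push_cast; ring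
      rw [hμt] at h0 ⊢
      rw [hKval, hμt]
      linear_combination (t : ZMod (4 * m)) * h0
    · refine ⟨-K, Or.inr rfl, ?_⟩
      have hμt : μ = 2 * (t : ZMod (4 * m)) + 1 := by rw [hμ, ht]; push_cast; ring
      rw [hμt] at h0 ⊢
      rw [hKval, hμt]
      linear_combination (-(t : ZMod (4 * m))) * h0
  have hcc : c * c = 1 := by
    rcases hc with rfl | rfl
    · exact hKK
    · linear_combination hKK
  have hcK : c * K = 1 ∨ c * K = -1 := by
    rcases hc with rfl | rfl
    · exact Or.inl hKK
    · exact Or.inr (by linear_combination -hKK)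
  have hinj : ∀ x y : ZMod (4 * m), c * x = c * y → x = y := by
    intro x y h
    have h2 : c * (c * x) = c * (c * y) := by rw [h]
    rwa [← mul_assoc, ← mul_assoc, hcc, one_mul, one_mul] at h2
  set f : (ZMod (4 * m) ⊕ ZMod (4 * m)) → (ZMod (4 * m) ⊕ ZMod (4 * m)) :=
    Sum.elim (fun i => Sum.inr (c * i + μ)) (fun i => Sum.inl (c * i + μ)) with hf
  have hinv : Function.Involutive f := by
    intro x
    rcases x with i | i <;>
      simp only [hf, Sum.elim_inl, Sum.elim_inr] <;>
      · congr 1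
        linear_combination i * hcc + hcm
  have hAdj : ∀ a b, (GP (4 * m) (2 * m - 1)).Adj a b →
      (GP (4 * m) (2 * m - 1)).Adj (f a) (f b) := by
    intro a b hab
    rw [GP, SimpleGraph.fromRel_adj] at hab ⊢
    rcases a with i | i <;> rcases b with j | j <;>
      simp only [hf, Sum.elim_inl, Sum.elim_inr] at *
    · obtain ⟨hne, hrel⟩ := hab
      have hij : i ≠ j := fun h => hne (by rw [h])
      refine ⟨fun h => hij (hinj i j (by
        have := Sum.inr.inj h
        linear_combination this)), ?_⟩
      rcases hrel with rfl | rfl <;> rcases hc with rfl | rfl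
      · exact Or.inl (by push_cast; ring)
      · exact Or.inr (by push_cast; ring)
      · exact Or.inr (by push_cast; ring)
      · exact Or.inl (by push_cast; ring)
    · obtain ⟨hne, hrel⟩ := hab
      have hij : i = j := by tauto
      subst hij
      exact ⟨by simp, Or.inr rfl⟩
    · obtain ⟨hne, hrel⟩ := hab
      have hij : j = i := by tauto
      subst hij
      exact ⟨by simp, Or.inl rfl⟩
    · obtain ⟨hne, hrel⟩ := hab
      have hij : i ≠ j := fun h => hne (by rw [h])
      refine ⟨fun h => hij (hinj i j (by
        have := Sum.inl.inj h
        linear_combination this)), ?_⟩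
      rcases hrel with rfl | rfl <;> rcases hcK with h1 | h1
      · exact Or.inl (by linear_combination h1)
      · exact Or.inr (by linear_combination -h1)
      · exact Or.inr (by linear_combination h1)
      · exact Or.inl (by linear_combination -h1)
  set α : GP (4 * m) (2 * m - 1) ≃g GP (4 * m) (2 * m - 1) :=
    { toEquiv := hinv.toPerm f
      map_rel_iff' := by
        intro a b
        constructor
        · intro h
          have h2 := hAdj _ _ h
          simpa [Function.Involutive.toPerm, hinv a, hinv b] using h2
        · exact hAdj a b } with hα
  have hαapp : ∀ x, α x = f x := fun _ => rfl
  have hfu : f (Sum.inl 0) = Sum.inr μ := by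
    simp [hf]
  have hfv : f (Sum.inr μ) = Sum.inl 0 := by
    show Sum.inl (c * μ + μ) = Sum.inl 0
    rw [hcm]
  have hu : α (Sum.inl 0) = Sum.inr μ := by rw [hαapp]; exact hfu
  have hv : α (Sum.inr μ) = Sum.inl 0 := by rw [hαapp]; exact hfv
  refine ⟨⟨α, hu, hv⟩, ?_⟩
  have hd : ∀ x y, (GP (4 * m) (2 * m - 1)).dist (f x) (f y)
      = (GP (4 * m) (2 * m - 1)).dist x y := fun x y => iso_dist_eq' α x y
  have hin1 : ∀ w, f w ∈ wSet (GP (4 * m) (2 * m - 1)) (Sum.inr μ) (Sum.inl 0) ↔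
      w ∈ wSet (GP (4 * m) (2 * m - 1)) (Sum.inl 0) (Sum.inr μ) := by
    intro w
    simp only [wSet, Set.mem_setOf_eq]
    rw [show (GP (4 * m) (2 * m - 1)).dist (Sum.inr μ) (f w)
        = (GP (4 * m) (2 * m - 1)).dist (Sum.inl 0) w by rw [← hfu]; exact hd _ w,
      show (GP (4 * m) (2 * m - 1)).dist (Sum.inl 0) (f w)
        = (GP (4 * m) (2 * m - 1)).dist (Sum.inr μ) w by rw [← hfv]; exact hd _ w]
  have hin2 : ∀ w, f w ∈ wSet (GP (4 * m) (2 * m - 1)) (Sum.inl 0) (Sum.inr μ) ↔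
      w ∈ wSet (GP (4 * m) (2 * m - 1)) (Sum.inr μ) (Sum.inl 0) := by
    intro w
    simp only [wSet, Set.mem_setOf_eq]
    rw [show (GP (4 * m) (2 * m - 1)).dist (Sum.inr μ) (f w)
        = (GP (4 * m) (2 * m - 1)).dist (Sum.inl 0) w by rw [← hfu]; exact hd _ w,
      show (GP (4 * m) (2 * m - 1)).dist (Sum.inl 0) (f w)
        = (GP (4 * m) (2 * m - 1)).dist (Sum.inr μ) w by rw [← hfv]; exact hd _ w]
  have himg : wSet (GP (4 * m) (2 * m - 1)) (Sum.inr μ) (Sum.inl 0)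
      = f '' wSet (GP (4 * m) (2 * m - 1)) (Sum.inl 0) (Sum.inr μ) := by
    ext w
    constructor
    · intro hw
      exact ⟨f w, (hin2 w).mpr hw, hinv w⟩
    · rintro ⟨x, hx, rfl⟩
      exact (hin1 x).mpr hx
  rw [IsBalancedPair, himg, Set.ncard_image_of_injective _ hinv.injective]
end
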